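/- Let F ≥ 0 and D > 0 be real, K_w ≥ 1 and K_s ≥ 1 integers, and 0 ≤ δ_s ≤ δ_w < 1, with δ_s < 1. Define R₀ := F·(K_w/(1−δ_w) + K_s/(1−δ_s))⁻¹, R₁ := F(1−δ_w)·(1 + (K_w/K_s)·(δ_w−δ_s)/(1−δ_w)) / ( K_w·(1 + ((K_w−1)/(2K_s))·(δ_w−δ_s)/(1−δ_w)) + K_s(1−δ_w)/(1−δ_s) ), M₁ := R₁·(D/K_w)·(1 − (1 + (K_w/K_s)·(δ_w−δ_s)/(1−δ_w))⁻¹), γ_local := K_w(1−δ_s)/(K_w(1−δ_s)+K_s(1−δ_w)), γ_sep := (1+K_w)/2, and γ_joint := 1 + (2K_w/(1+K_w))·(K_s(1−δ_w))/(K_w(1−δ_s)). Then D·(R₁ − R₀) = M₁ · γ_local · γ_sep · γ_joint; equivalently, the straight line through the achievable points (0, R₀) and (M₁, R₁) has slope (1/D)·γ_local·γ_sep·γ_joint. -/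

import Mathlib

set_option maxHeartbeats 1000000 in
theorem key_slope_identity (F D a b w s : ℝ) (ha : a ≠ 0) (hb : b ≠ 0) (hw : w ≠ 0) (hs : s ≠ 0)
    (hN : s*a + w*(b-a) ≠ 0)
    (hP : 2*s*a*w*b + w*(w-1)*(b-a)*b + 2*s*s*a*a ≠ 0)
    (hQ : w*b + s*a ≠ 0)
    (h2 : w*(1 + ((w-1)/(2*s))*((b-a)/a)) + s*a/b ≠ 0)
    (h5 : 1 + w ≠ 0) :
    D * (F*a*(1+(w/s)*((b-a)/a)) / (w*(1+((w-1)/(2*s))*((b-a)/a)) + s*a/b) - F*(w/a+s/b)⁻¹)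
    = (F*a*(1+(w/s)*((b-a)/a)) / (w*(1+((w-1)/(2*s))*((b-a)/a)) + s*a/b) * (D/w)
        * (1 - (1+(w/s)*((b-a)/a))⁻¹)) * (w*b/(w*b+s*a)) * ((1+w)/2)
      * (1 + (2*w/(1+w))*(s*a)/(w*b)) := by
  have e1 : F*a*(1+(w/s)*((b-a)/a)) / (w*(1+((w-1)/(2*s))*((b-a)/a)) + s*a/b)
      = 2*F*a*b*(s*a + w*(b-a)) / (2*s*a*w*b + w*(w-1)*(b-a)*b + 2*s*s*a*a) := by
    rw [div_eq_div_iff h2 hP]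
    field_simp
  have e2 : F*(w/a+s/b)⁻¹ = F*a*b/(w*b+s*a) := by
    have h : w/a+s/b = (w*b+s*a)/(a*b) := by
      field_simp
    rw [h, inv_div]
    ring
  have e3 : 1 - (1+(w/s)*((b-a)/a))⁻¹ = w*(b-a)/(s*a + w*(b-a)) := by
    have h : 1+(w/s)*((b-a)/a) = (s*a + w*(b-a))/(s*a) := by
      field_simp
    rw [h, inv_div]
    field_simp
    ring
  have e4 : 1 + (2*w/(1+w))*(s*a)/(w*b) = (b*(1+w)+2*s*a)/((1+w)*b) := by
    field_simp
  rw [e1, e2, e3, e4]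
  generalize hPg : 2*s*a*w*b + w*(w-1)*(b-a)*b + 2*s*s*a*a = P at hP ⊢
  generalize hNg : s*a + w*(b-a) = N at hN ⊢
  generalize hQg : w*b + s*a = Q at hQ ⊢
  field_simp
  subst hPg hNg hQg
  ring

/-- With
`R₀ := F·(K_w/(1−δ_w) + K_s/(1−δ_s))⁻¹`,
`R₁ := F(1−δ_w)·(1 + (K_w/K_s)·(δ_w−δ_s)/(1−δ_w)) /
       (K_w·(1 + ((K_w−1)/(2K_s))·(δ_w−δ_s)/(1−δ_w)) + K_s(1−δ_w)/(1−δ_s))`,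
`M₁ := R₁·(D/K_w)·(1 − (1 + (K_w/K_s)·(δ_w−δ_s)/(1−δ_w))⁻¹)`,
`γ_local := K_w(1−δ_s)/(K_w(1−δ_s)+K_s(1−δ_w))`, `γ_sep := (1+K_w)/2`,
`γ_joint := 1 + (2K_w/(1+K_w))·(K_s(1−δ_w))/(K_w(1−δ_s))`, we have
`D·(R₁ − R₀) = M₁·γ_local·γ_sep·γ_joint`. -/
theorem small_memory_slope (F D : ℝ) (hF : 0 ≤ F) (hD : 0 < D)
    (Kw Ks : ℕ) (hKw : 1 ≤ Kw) (hKs : 1 ≤ Ks)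
    (δs δw : ℝ) (hδs0 : 0 ≤ δs) (hsw : δs ≤ δw) (hδw1 : δw < 1) (hδs1 : δs < 1) :
    D * (F * (1 - δw) * (1 + ((Kw : ℝ) / (Ks : ℝ)) * ((δw - δs) / (1 - δw))) /
          ((Kw : ℝ) * (1 + (((Kw : ℝ) - 1) / (2 * (Ks : ℝ))) * ((δw - δs) / (1 - δw))) +
            (Ks : ℝ) * (1 - δw) / (1 - δs)) -
        F * ((Kw : ℝ) / (1 - δw) + (Ks : ℝ) / (1 - δs))⁻¹) =
      (F * (1 - δw) * (1 + ((Kw : ℝ) / (Ks : ℝ)) * ((δw - δs) / (1 - δw))) /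
          ((Kw : ℝ) * (1 + (((Kw : ℝ) - 1) / (2 * (Ks : ℝ))) * ((δw - δs) / (1 - δw))) +
            (Ks : ℝ) * (1 - δw) / (1 - δs)) *
        (D / (Kw : ℝ)) *
        (1 - (1 + ((Kw : ℝ) / (Ks : ℝ)) * ((δw - δs) / (1 - δw)))⁻¹)) *
      ((Kw : ℝ) * (1 - δs) / ((Kw : ℝ) * (1 - δs) + (Ks : ℝ) * (1 - δw))) *
      ((1 + (Kw : ℝ)) / 2) *
      (1 + (2 * (Kw : ℝ) / (1 + (Kw : ℝ))) * ((Ks : ℝ) * (1 - δw)) / ((Kw : ℝ) * (1 - δs))) := by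
  set a : ℝ := 1 - δw with ha_def
  set b : ℝ := 1 - δs with hb_def
  have hKw1 : (1:ℝ) ≤ (Kw:ℝ) := by exact_mod_cast hKw
  have hKs1 : (1:ℝ) ≤ (Ks:ℝ) := by exact_mod_cast hKs
  have hw0 : (0:ℝ) < (Kw:ℝ) := by linarith
  have hs0 : (0:ℝ) < (Ks:ℝ) := by linarith
  have haa : (0:ℝ) < a := by simp only [ha_def]; linarith
  have hbb : (0:ℝ) < b := by simp only [hb_def]; linarith
  have hba : 0 ≤ b - a := by simp only [ha_def, hb_def]; linarith
  have hN : (Ks:ℝ)*a + (Kw:ℝ)*(b-a) ≠ 0 := by positivity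
  have hP : 2*(Ks:ℝ)*a*(Kw:ℝ)*b + (Kw:ℝ)*((Kw:ℝ)-1)*(b-a)*b + 2*(Ks:ℝ)*(Ks:ℝ)*a*a ≠ 0 := by
    have h1 : (0:ℝ) < 2*(Ks:ℝ)*a*(Kw:ℝ)*b := by positivity
    have h2 : (0:ℝ) ≤ (Kw:ℝ)*((Kw:ℝ)-1)*(b-a)*b := by
      have : (0:ℝ) ≤ (Kw:ℝ)-1 := by linarith
      positivity
    have h3 : (0:ℝ) < 2*(Ks:ℝ)*(Ks:ℝ)*a*a := by positivity
    nlinarith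
  have hQ : (Kw:ℝ)*b + (Ks:ℝ)*a ≠ 0 := by positivity
  have h2' : (Kw:ℝ)*(1 + (((Kw:ℝ)-1)/(2*(Ks:ℝ)))*((b-a)/a)) + (Ks:ℝ)*a/b ≠ 0 := by
    have h1 : (0:ℝ) ≤ (((Kw:ℝ)-1)/(2*(Ks:ℝ)))*((b-a)/a) := by
      have : (0:ℝ) ≤ (Kw:ℝ)-1 := by linarith
      positivity
    have h3 : (0:ℝ) < (Ks:ℝ)*a/b := by positivity
    nlinarith
  have h5 : 1 + (Kw:ℝ) ≠ 0 := by positivity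
  have key := key_slope_identity F D a b (Kw:ℝ) (Ks:ℝ) (ne_of_gt haa) (ne_of_gt hbb)
    (ne_of_gt hw0) (ne_of_gt hs0) hN hP hQ h2' h5
  have hd : b - a = δw - δs := by simp only [ha_def, hb_def]; ring
  rw [hd] at key
  exact key
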